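/- arXiv:2306.13239 — 2 statements merged into one kernel-verified Lean document; each statement's English description precedes it below -/
import Mathlib

section
/- Let M ∈ ℝ^{d_L × d_0} and let W_1,…,W_L be matrices of compatible dimensions with W_L⋯W_1 = M. Then for every j with 1 ≤ j ≤ L−1, ‖W_L⋯W_{j+1}‖_F² · ‖W_j⋯W_1‖_F² ≥ ‖M‖_*². -/
open Matrix Finset

noncomputable def frobNorm {m n : Type*} [Fintype m] [Fintype n] (M : Matrix m n ℝ) : ℝ :=
  Real.sqrt (∑ i, ∑ j, (M i j) ^ 2)

noncomputable def nuclearNorm {m n : Type*} [Fintype m] [Fintype n] [DecidableEq n]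
    (M : Matrix m n ℝ) : ℝ :=
  ∑ i, Real.sqrt ((Matrix.isHermitian_conjTranspose_mul_self M).eigenvalues i)

lemma trace_mul_eq_sum {α β : Type*} [Fintype α] [Fintype β]
    (X : Matrix α β ℝ) (Y : Matrix β α ℝ) :
    (X * Y).trace = ∑ i, ∑ j, X i j * Y j i := by
  simp [Matrix.trace, Matrix.diag, Matrix.mul_apply]

lemma trace_self_mul_conjTranspose_eq {ι κ : Type*} [Fintype ι] [Fintype κ]
    (C : Matrix ι κ ℝ) : (C * Cᴴ).trace = ∑ i, ∑ j, C i j ^ 2 := by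
  simp [Matrix.trace, Matrix.diag, Matrix.mul_apply, sq]

lemma trace_self_mul_conjTranspose_nonneg {ι κ : Type*} [Fintype ι] [Fintype κ]
    (C : Matrix ι κ ℝ) : 0 ≤ (C * Cᴴ).trace := by
  rw [trace_self_mul_conjTranspose_eq]
  exact Finset.sum_nonneg fun i _ => Finset.sum_nonneg fun j _ => sq_nonneg _

lemma frobNorm_sq_eq {ι κ : Type*} [Fintype ι] [Fintype κ] (C : Matrix ι κ ℝ) :
    frobNorm C ^ 2 = (C * Cᴴ).trace := by
  rw [trace_self_mul_conjTranspose_eq, frobNorm, Real.sq_sqrt]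
  exact Finset.sum_nonneg fun i _ => Finset.sum_nonneg fun j _ => sq_nonneg _

lemma nuclear_mul_le_frob {ι κ n : Type*} [Fintype ι] [Fintype κ] [Fintype n]
    [DecidableEq n] [DecidableEq ι]
    (A : Matrix ι κ ℝ) (B : Matrix κ n ℝ) :
    nuclearNorm (A * B) ^ 2 ≤ frobNorm A ^ 2 * frobNorm B ^ 2 := by
  classical
  set M : Matrix ι n ℝ := A * B with hMdef
  have hH := Matrix.isHermitian_conjTranspose_mul_self M
  set μ : n → ℝ := hH.eigenvalues with hμdef
  have hμ0 : ∀ i, 0 ≤ μ i := fun i => Matrix.eigenvalues_conjTranspose_mul_self_nonneg M i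
  set V : Matrix n n ℝ := (hH.eigenvectorUnitary : Matrix n n ℝ) with hVdef
  have hVV' : V * Vᴴ = 1 := by
    have := (Matrix.mem_unitaryGroup_iff).mp hH.eigenvectorUnitary.2
    rw [hVdef]
    simpa [Matrix.star_eq_conjTranspose] using this
  have hspec : Vᴴ * (Mᴴ * M) * V = Matrix.diagonal μ := by
    have := Matrix.IsHermitian.conjStarAlgAut_star_eigenvectorUnitary hH
    rw [hVdef, hμdef]
    simpa [Unitary.conjStarAlgAut_apply, Matrix.star_eq_conjTranspose, RCLike.ofReal_real_eq_id] using this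
  set N : Matrix ι n ℝ := M * V with hNdef
  have hNN : Nᴴ * N = Matrix.diagonal μ := by
    rw [hNdef, conjTranspose_mul, ← hspec]
    simp only [Matrix.mul_assoc]
  set σ : n → ℝ := fun i => Real.sqrt (μ i) with hσdef
  set c : n → ℝ := fun i => if μ i = 0 then 0 else (σ i)⁻¹ with hcdef
  set U : Matrix ι n ℝ := N * Matrix.diagonal c with hUdef
  have hσσ : ∀ i, σ i * σ i = μ i := fun i => Real.mul_self_sqrt (hμ0 i)
  have hσne : ∀ i, μ i ≠ 0 → σ i ≠ 0 := fun i hi h => hi (by rw [← hσσ i, h, mul_zero])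
  have hcμ : ∀ i, c i * μ i = σ i := by
    intro i
    by_cases hi : μ i = 0
    · simp only [hcdef, hσdef, hi, if_pos, mul_zero, Real.sqrt_zero, if_true]
    · simp only [hcdef, if_neg hi]
      rw [← hσσ i, ← mul_assoc, inv_mul_cancel₀ (hσne i hi), one_mul]
  have hUconj : Uᴴ = Matrix.diagonal c * Nᴴ := by
    rw [hUdef, conjTranspose_mul, diagonal_conjTranspose]
    simp
  have hUN : Uᴴ * N = Matrix.diagonal σ := by
    rw [hUconj, Matrix.mul_assoc, hNN, diagonal_mul_diagonal]
    exact congrArg _ (funext hcμ)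
  set d : n → ℝ := fun i => if μ i = 0 then 0 else 1 with hddef
  have hUU : Uᴴ * U = Matrix.diagonal d := by
    rw [hUdef, ← Matrix.mul_assoc, hUN, diagonal_mul_diagonal]
    have hfun : (fun i => σ i * c i) = d := funext fun i => by
      by_cases hi : μ i = 0
      · simp [hcdef, hddef, hσdef, hi]
      · simp only [hcdef, hddef, hσdef, if_neg hi]
        exact mul_inv_cancel₀ (hσne i hi)
    rw [hfun]
  have hUd : U * Matrix.diagonal d = U := by
    rw [hUdef, Matrix.mul_assoc, diagonal_mul_diagonal]
    have hfun : (fun i => c i * d i) = c := funext fun i => by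
      by_cases hi : μ i = 0 <;> simp [hcdef, hddef, hi]
    rw [hfun]
  set P : Matrix ι ι ℝ := U * Uᴴ with hPdef
  have hPP : P * P = P := by
    rw [hPdef, Matrix.mul_assoc U, ← Matrix.mul_assoc Uᴴ, hUU, ← Matrix.mul_assoc, hUd]
  have hPsymm : Pᴴ = P := by
    rw [hPdef, conjTranspose_mul, conjTranspose_conjTranspose]
  have hABV : A * (B * V) = N := by rw [← Matrix.mul_assoc, ← hMdef]
  have htrace : (Uᴴ * (A * (B * V))).trace = ∑ i, σ i := by
    rw [hABV, hUN, Matrix.trace_diagonal]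
  have hnucM : nuclearNorm M = ∑ i, σ i := rfl
  have hbig : (Uᴴ * (A * (B * V))).trace
      = ∑ p : n × κ, (Uᴴ * A) p.1 p.2 * (B * V) p.2 p.1 := by
    rw [← Matrix.mul_assoc, trace_mul_eq_sum, ← Fintype.sum_prod_type']
  have hCS := Finset.sum_mul_sq_le_sq_mul_sq Finset.univ
    (fun p : n × κ => (Uᴴ * A) p.1 p.2) (fun p : n × κ => (B * V) p.2 p.1)
  have hAterm : ∑ p : n × κ, ((Uᴴ * A) p.1 p.2) ^ 2 = ((Uᴴ * A) * (Uᴴ * A)ᴴ).trace := by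
    rw [trace_self_mul_conjTranspose_eq, ← Fintype.sum_prod_type']
  have h1 : ((Uᴴ * A) * (Uᴴ * A)ᴴ).trace = ((A * Aᴴ) * P).trace := by
    rw [conjTranspose_mul Uᴴ A, conjTranspose_conjTranspose]
    calc ((Uᴴ * A) * (Aᴴ * U)).trace
        = (Uᴴ * (A * (Aᴴ * U))).trace := by rw [Matrix.mul_assoc]
      _ = ((A * (Aᴴ * U)) * Uᴴ).trace := Matrix.trace_mul_comm _ _
      _ = ((A * Aᴴ) * P).trace := by
          rw [hPdef, ← Matrix.mul_assoc A Aᴴ U, Matrix.mul_assoc (A * Aᴴ)]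
  have hQ2 : ((1 : Matrix ι ι ℝ) - P) * (1 - P) = 1 - P := by
    rw [sub_mul, one_mul, mul_sub, mul_one, hPP]
    simp
  have hQsymm : ((1 : Matrix ι ι ℝ) - P)ᴴ = 1 - P := by
    rw [conjTranspose_sub, conjTranspose_one, hPsymm]
  have h2 : ((A * Aᴴ) * P).trace ≤ (A * Aᴴ).trace := by
    have hpos : 0 ≤ (((1 - P) * A) * ((1 - P) * A)ᴴ).trace :=
      trace_self_mul_conjTranspose_nonneg _
    have heq : (((1 - P) * A) * ((1 - P) * A)ᴴ).trace = ((A * Aᴴ) * (1 - P)).trace := by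
      rw [conjTranspose_mul, hQsymm]
      calc (((1 - P) * A) * (Aᴴ * (1 - P))).trace
          = ((Aᴴ * (1 - P)) * ((1 - P) * A)).trace := Matrix.trace_mul_comm _ _
        _ = (Aᴴ * (((1 - P) * (1 - P)) * A)).trace := by
            simp only [Matrix.mul_assoc]
        _ = (Aᴴ * ((1 - P) * A)).trace := by rw [hQ2]
        _ = (((1 - P) * A) * Aᴴ).trace := Matrix.trace_mul_comm _ _
        _ = ((A * Aᴴ) * (1 - P)).trace := by
            rw [Matrix.trace_mul_comm (A * Aᴴ), ← Matrix.mul_assoc]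
    have : 0 ≤ ((A * Aᴴ) * (1 - P)).trace := heq ▸ hpos
    rw [mul_sub, mul_one, Matrix.trace_sub] at this
    linarith
  have hBterm : ∑ p : n × κ, ((B * V) p.2 p.1) ^ 2 = ((B * V) * (B * V)ᴴ).trace := by
    rw [trace_self_mul_conjTranspose_eq]
    calc ∑ p : n × κ, ((B * V) p.2 p.1) ^ 2
        = ∑ i : n, ∑ k : κ, ((B * V) k i) ^ 2 :=
          Fintype.sum_prod_type' (f := fun i k => ((B * V) k i) ^ 2)
      _ = ∑ k : κ, ∑ i : n, ((B * V) k i) ^ 2 := Finset.sum_comm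
  have h3 : ((B * V) * (B * V)ᴴ).trace = (B * Bᴴ).trace := by
    rw [conjTranspose_mul, Matrix.mul_assoc B V, ← Matrix.mul_assoc V Vᴴ, hVV', Matrix.one_mul]
  rw [frobNorm_sq_eq, frobNorm_sq_eq, hnucM, ← htrace, hbig]
  calc (∑ p : n × κ, (Uᴴ * A) p.1 p.2 * (B * V) p.2 p.1) ^ 2
      ≤ (∑ p : n × κ, ((Uᴴ * A) p.1 p.2) ^ 2) * ∑ p : n × κ, ((B * V) p.2 p.1) ^ 2 := hCS
    _ = ((A * Aᴴ) * P).trace * (B * Bᴴ).trace := by rw [hAterm, h1, hBterm, h3]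
    _ ≤ (A * Aᴴ).trace * (B * Bᴴ).trace :=
        mul_le_mul_of_nonneg_right h2 (trace_self_mul_conjTranspose_nonneg B)

/-- If W_L ⋯ W_1 = M then for every 1 ≤ j ≤ L-1,
    ‖W_L ⋯ W_{j+1}‖_F² · ‖W_j ⋯ W_1‖_F² ≥ ‖M‖_*².
    Here `P j` denotes the suffix product W_L ⋯ W_{j+1} and `Q j` the prefix
    product W_j ⋯ W_1 (with the layers 0-indexed in Lean). -/
theorem frob_prod_ge_nuclear {L : ℕ} (d : ℕ → ℕ)
    (W : ∀ i : ℕ, Matrix (Fin (d (i + 1))) (Fin (d i)) ℝ)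
    (P : ∀ j : ℕ, Matrix (Fin (d L)) (Fin (d j)) ℝ)
    (Q : ∀ j : ℕ, Matrix (Fin (d j)) (Fin (d 0)) ℝ)
    (hPL : P L = 1) (hP : ∀ j, j < L → P j = P (j + 1) * W j)
    (hQ0 : Q 0 = 1) (hQ : ∀ j, j < L → Q (j + 1) = W j * Q j)
    (M : Matrix (Fin (d L)) (Fin (d 0)) ℝ) (hM : Q L = M) :
    ∀ j, 1 ≤ j → j ≤ L - 1 →
      nuclearNorm M ^ 2 ≤ frobNorm (P j) ^ 2 * frobNorm (Q j) ^ 2 := by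
  have key : ∀ k, k ≤ L → P (L - k) * Q (L - k) = M := by
    intro k
    induction k with
    | zero => intro _; rw [Nat.sub_zero, hPL, Matrix.one_mul, hM]
    | succ k ih =>
      intro hk
      have hjL : L - (k + 1) < L := by omega
      have hj1 : L - (k + 1) + 1 = L - k := by omega
      rw [hP _ hjL, Matrix.mul_assoc, ← hQ _ hjL, hj1]
      exact ih (by omega)
  intro j hj1 hjL
  have hPQ : P j * Q j = M := by
    have := key (L - j) (by omega)
    rwa [Nat.sub_sub_self (by omega : j ≤ L)] at this
  rw [← hPQ]
  exact nuclear_mul_le_frob (P j) (Q j)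
end

section
/- Suppose A_1,…,A_n satisfy (2,δ)-RIP with δ < 1, b_i = ⟨A_i,M*⟩, and M ∈ ℝ^{d_L×d_0} satisfies ⟨A_i,M⟩ = b_i for all i and ‖M‖_* ≤ ((1+δ)/(1−δ))‖M*‖_*. Then ‖M − M*‖_F² ≤ 8δ/(1−δ)² · ‖M*‖_*². -/
open Matrix Finset

/-- trace inner product ⟨A, B⟩ = tr(Aᵀ B). -/
noncomputable def minner {m n : Type*} [Fintype m] [Fintype n] (A B : Matrix m n ℝ) : ℝ :=
  Matrix.trace (Aᵀ * B)

/-- (r, δ)-RIP for the family of measurement matrices A. -/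
noncomputable def RIP {dL d0 n : ℕ} (r : ℕ) (δ : ℝ)
    (A : Fin n → Matrix (Fin dL) (Fin d0) ℝ) : Prop :=
  ∀ X : Matrix (Fin dL) (Fin d0) ℝ, X.rank ≤ r →
    (1 - δ) * frobNorm X ^ 2 ≤ (1 / (n : ℝ)) * ∑ i, minner (A i) X ^ 2 ∧
    (1 / (n : ℝ)) * ∑ i, minner (A i) X ^ 2 ≤ (1 + δ) * frobNorm X ^ 2

namespace RipAux

section lems
variable {m n : Type*} [Fintype m] [Fintype n]

lemma minner_eq (A B : Matrix m n ℝ) : minner A B = ∑ i, ∑ j, A i j * B i j := by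
  simp only [minner, Matrix.trace, Matrix.diag, Matrix.mul_apply, Matrix.transpose_apply]
  exact Finset.sum_comm

lemma minner_comm (A B : Matrix m n ℝ) : minner A B = minner B A := by
  simp [minner_eq, mul_comm]

lemma minner_add_right (A B C : Matrix m n ℝ) :
    minner A (B + C) = minner A B + minner A C := by
  simp [minner_eq, Matrix.add_apply, mul_add, Finset.sum_add_distrib]

lemma minner_sub_right (A B C : Matrix m n ℝ) :
    minner A (B - C) = minner A B - minner A C := by
  simp [minner_eq, Matrix.sub_apply, mul_sub, Finset.sum_sub_distrib]

lemma minner_smul_right (c : ℝ) (A B : Matrix m n ℝ) :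
    minner A (c • B) = c * minner A B := by
  simp only [minner_eq, Matrix.smul_apply, smul_eq_mul, Finset.mul_sum]
  exact Finset.sum_congr rfl fun i _ => Finset.sum_congr rfl fun j _ => by ring

lemma minner_sum_right {ι : Type*} (s : Finset ι) (A : Matrix m n ℝ)
    (Y : ι → Matrix m n ℝ) :
    minner A (∑ j ∈ s, Y j) = ∑ j ∈ s, minner A (Y j) := by
  classical
  induction s using Finset.induction with
  | empty => simp [minner_eq]
  | insert _ _ h ih => rw [Finset.sum_insert h, minner_add_right, ih, Finset.sum_insert h]

lemma minner_vecMulVec (a c : m → ℝ) (b d : n → ℝ) :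
    minner (vecMulVec a b) (vecMulVec c d) = (a ⬝ᵥ c) * (b ⬝ᵥ d) := by
  rw [minner_eq, dotProduct, dotProduct, Finset.sum_mul_sum]
  exact Finset.sum_congr rfl fun i _ => Finset.sum_congr rfl fun j _ => by
    simp [vecMulVec_apply]; ring

lemma minner_vecMulVec_right (C : Matrix m n ℝ) (u : m → ℝ) (v : n → ℝ) :
    minner C (vecMulVec u v) = u ⬝ᵥ (C *ᵥ v) := by
  simp only [minner_eq, vecMulVec_apply, dotProduct, Matrix.mulVec, Finset.mul_sum]
  exact Finset.sum_congr rfl fun i _ => Finset.sum_congr rfl fun j _ => by ring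

lemma frob_sq (X : Matrix m n ℝ) : frobNorm X ^ 2 = minner X X := by
  rw [frobNorm, Real.sq_sqrt (by positivity)]
  simp [minner_eq, sq]

lemma dot_le (a b : m → ℝ) :
    a ⬝ᵥ b ≤ Real.sqrt (a ⬝ᵥ a) * Real.sqrt (b ⬝ᵥ b) := by
  have h := Finset.sum_mul_sq_le_sq_mul_sq Finset.univ a b
  calc a ⬝ᵥ b ≤ |a ⬝ᵥ b| := le_abs_self _
    _ = Real.sqrt ((a ⬝ᵥ b) ^ 2) := (Real.sqrt_sq_eq_abs _).symm
    _ ≤ Real.sqrt ((∑ i, a i ^ 2) * (∑ i, b i ^ 2)) := Real.sqrt_le_sqrt h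
    _ = Real.sqrt (a ⬝ᵥ a) * Real.sqrt (b ⬝ᵥ b) := by
        rw [Real.sqrt_mul (by positivity)]
        simp [dotProduct, sq]

lemma dot_self_eq_zero {a : m → ℝ} (h : a ⬝ᵥ a = 0) : a = 0 := by
  funext i
  have h2 := (Finset.sum_eq_zero_iff_of_nonneg (fun i _ => mul_self_nonneg (a i))).mp h i
    (Finset.mem_univ i)
  simpa [mul_self_eq_zero] using h2

lemma nuclearNorm_nonneg [DecidableEq n] (X : Matrix m n ℝ) : 0 ≤ nuclearNorm X := by
  unfold nuclearNorm; exact Finset.sum_nonneg fun _ _ => Real.sqrt_nonneg _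

end lems

lemma euc_sum_apply {d : ℕ} {ι : Type*} (s : Finset ι) (f : ι → EuclideanSpace ℝ (Fin d))
    (t : Fin d) : (∑ j ∈ s, f j) t = ∑ j ∈ s, f j t := by
  classical
  induction s using Finset.induction with
  | empty => rfl
  | insert _ _ h ih => rw [Finset.sum_insert h, Finset.sum_insert h, ← ih]; rfl

lemma exists_decomp {dL d0 : ℕ} (X : Matrix (Fin dL) (Fin d0) ℝ) :
    ∃ (u : Fin d0 → Fin dL → ℝ) (v : Fin d0 → Fin d0 → ℝ) (lam : Fin d0 → ℝ),
      (∀ j, 0 ≤ lam j) ∧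
      (∀ j k, u j ⬝ᵥ u k = if j = k then lam j else 0) ∧
      (∀ j k, v j ⬝ᵥ v k = if j = k then 1 else 0) ∧
      (X = ∑ j, vecMulVec (u j) (v j)) ∧
      (nuclearNorm X = ∑ j, Real.sqrt (lam j)) ∧
      (∀ x : Fin d0 → ℝ, x = ∑ j, (x ⬝ᵥ v j) • v j) := by
  classical
  set h := Matrix.isHermitian_conjTranspose_mul_self X with hh
  set v : Fin d0 → Fin d0 → ℝ := fun j => ⇑(h.eigenvectorBasis j) with hv
  set lam : Fin d0 → ℝ := h.eigenvalues with hlam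
  set u : Fin d0 → Fin dL → ℝ := fun j => X *ᵥ v j with hu
  have hXH : Xᴴ = Xᵀ := by ext i j; simp [conjTranspose_apply]
  have hvv : ∀ j k, v j ⬝ᵥ v k = if j = k then 1 else 0 := by
    intro j k
    have h2 := (orthonormal_iff_ite.mp h.eigenvectorBasis.orthonormal) j k
    simpa [PiLp.inner_apply, RCLike.inner_apply, dotProduct, hv, mul_comm] using h2
  have huu : ∀ j k, u j ⬝ᵥ u k = if j = k then lam j else 0 := by
    intro j k
    have he : (Xᴴ * X) *ᵥ v k = lam k • v k := h.mulVec_eigenvectorBasis k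
    have h3 : u j ⬝ᵥ u k = v j ⬝ᵥ ((Xᴴ * X) *ᵥ v k) := by
      simp only [hu]
      rw [hXH, ← Matrix.mulVec_mulVec, Matrix.dotProduct_mulVec (v j) Xᵀ,
        Matrix.vecMul_transpose]
    rw [h3, he, dotProduct_smul, hvv j k]
    rcases eq_or_ne j k with rfl | hne
    · simp
    · simp [hne]
  have hcomp : ∀ x : Fin d0 → ℝ, x = ∑ j, (x ⬝ᵥ v j) • v j := by
    intro x
    have hrepr := h.eigenvectorBasis.sum_repr' (WithLp.toLp 2 x : EuclideanSpace ℝ (Fin d0))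
    have hinner : ∀ i, (inner ℝ (h.eigenvectorBasis i) (WithLp.toLp 2 x : EuclideanSpace ℝ (Fin d0)) : ℝ)
        = x ⬝ᵥ v i := by
      intro i
      simp [PiLp.inner_apply, RCLike.inner_apply, dotProduct, hv,
        mul_comm]
    funext t
    have h5 : x t = (∑ i : Fin d0,
        (inner ℝ (h.eigenvectorBasis i) (WithLp.toLp 2 x : EuclideanSpace ℝ (Fin d0)) : ℝ) •
          h.eigenvectorBasis i) t :=
      congrFun (congrArg (fun z : EuclideanSpace ℝ (Fin d0) => z.ofLp) hrepr.symm) t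
    rw [euc_sum_apply] at h5
    simp only [hinner] at h5
    convert h5 using 2 with j
    simp [hv]
  refine ⟨u, v, lam, ?_, huu, hvv, ?_, rfl, hcomp⟩
  · intro j; exact Matrix.eigenvalues_conjTranspose_mul_self_nonneg X j
  · ext a bb
    have := congrFun (hcomp (X a)) bb
    simpa [Matrix.sum_apply, vecMulVec_apply, hu, Matrix.mulVec, Finset.sum_apply] using this

/-- Frobenius norm squared from a decomposition. -/
lemma frob_sq_of_decomp {dL d0 : ℕ} (X : Matrix (Fin dL) (Fin d0) ℝ)
    {u : Fin d0 → Fin dL → ℝ} {v : Fin d0 → Fin d0 → ℝ} {lam : Fin d0 → ℝ}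
    (huu : ∀ j k, u j ⬝ᵥ u k = if j = k then lam j else 0)
    (hvv : ∀ j k, v j ⬝ᵥ v k = if j = k then 1 else 0)
    (hX : X = ∑ j, vecMulVec (u j) (v j)) :
    frobNorm X ^ 2 = ∑ j, lam j := by
  have h1 : minner X X = ∑ j, minner X (vecMulVec (u j) (v j)) := by
    nth_rewrite 2 [hX]
    rw [minner_sum_right]
  rw [frob_sq, h1]
  refine Finset.sum_congr rfl fun j _ => ?_
  nth_rewrite 1 [hX]
  rw [minner_comm, minner_sum_right, Finset.sum_eq_single j]
  · rw [minner_vecMulVec, huu, hvv]; simp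
  · intro k _ hk
    rw [minner_vecMulVec, huu, hvv]; simp [Ne.symm hk]
  · intro habs; exact absurd (Finset.mem_univ j) habs

lemma dotProduct_finsum {m : Type*} [Fintype m] {ι : Type*} (s : Finset ι)
    (a : m → ℝ) (f : ι → m → ℝ) :
    a ⬝ᵥ (∑ j ∈ s, f j) = ∑ j ∈ s, a ⬝ᵥ f j := by
  classical
  induction s using Finset.induction with
  | empty => simp
  | insert _ _ h ih => rw [Finset.sum_insert h, dotProduct_add, ih, Finset.sum_insert h]

lemma finsum_dotProduct {m : Type*} [Fintype m] {ι : Type*} (s : Finset ι)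
    (a : m → ℝ) (f : ι → m → ℝ) :
    (∑ j ∈ s, f j) ⬝ᵥ a = ∑ j ∈ s, f j ⬝ᵥ a := by
  classical
  induction s using Finset.induction with
  | empty => simp
  | insert _ _ h ih => rw [Finset.sum_insert h, add_dotProduct, ih, Finset.sum_insert h]

lemma minner_nuclear_le {dL d0 : ℕ} (C X : Matrix (Fin dL) (Fin d0) ℝ)
    (hC : ∀ x : Fin d0 → ℝ, (C *ᵥ x) ⬝ᵥ (C *ᵥ x) ≤ x ⬝ᵥ x) :
    minner C X ≤ nuclearNorm X := by
  obtain ⟨u, v, lam, hlam0, huu, hvv, hXsum, hnn, -⟩ := exists_decomp X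
  rw [hnn]
  nth_rewrite 1 [hXsum]
  rw [minner_sum_right]
  refine Finset.sum_le_sum fun j _ => ?_
  rw [minner_vecMulVec_right]
  calc u j ⬝ᵥ (C *ᵥ v j)
      ≤ Real.sqrt (u j ⬝ᵥ u j) * Real.sqrt ((C *ᵥ v j) ⬝ᵥ (C *ᵥ v j)) := dot_le _ _
    _ ≤ Real.sqrt (lam j) * Real.sqrt (v j ⬝ᵥ v j) := by
        rw [huu j j, if_pos rfl]
        exact mul_le_mul_of_nonneg_left (Real.sqrt_le_sqrt (hC _)) (Real.sqrt_nonneg _)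
    _ = Real.sqrt (lam j) := by rw [hvv j j, if_pos rfl, Real.sqrt_one, mul_one]

lemma nuclear_eq_sup {dL d0 : ℕ} (X : Matrix (Fin dL) (Fin d0) ℝ) :
    ∃ C : Matrix (Fin dL) (Fin d0) ℝ,
      (∀ x : Fin d0 → ℝ, (C *ᵥ x) ⬝ᵥ (C *ᵥ x) ≤ x ⬝ᵥ x) ∧ minner C X = nuclearNorm X := by
  classical
  obtain ⟨u, v, lam, hlam0, huu, hvv, hXsum, hnn, hcomp⟩ := exists_decomp X
  set w : Fin d0 → ℝ := fun j => if lam j = 0 then 0 else (Real.sqrt (lam j))⁻¹ with hw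
  refine ⟨∑ j, w j • vecMulVec (u j) (v j), ?_, ?_⟩
  · intro x
    have hCx : (∑ j, w j • vecMulVec (u j) (v j)) *ᵥ x
        = ∑ j, (w j * (v j ⬝ᵥ x)) • u j := by
      funext i
      simp only [Matrix.mulVec, dotProduct, Finset.sum_apply, Matrix.sum_apply,
        Matrix.smul_apply, vecMulVec_apply, smul_eq_mul, Pi.smul_apply, Finset.sum_mul]
      rw [Finset.sum_comm]
      refine Finset.sum_congr rfl fun j _ => ?_
      rw [mul_comm (w j) _, Finset.sum_mul, Finset.sum_mul]
      exact Finset.sum_congr rfl fun t _ => by ring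
    rw [hCx]
    have hdot : (∑ j, (w j * (v j ⬝ᵥ x)) • u j) ⬝ᵥ (∑ k, (w k * (v k ⬝ᵥ x)) • u k)
        = ∑ j, (w j * (v j ⬝ᵥ x)) ^ 2 * lam j := by
      rw [finsum_dotProduct]
      refine Finset.sum_congr rfl fun j _ => ?_
      rw [dotProduct_finsum, Finset.sum_eq_single j]
      · rw [smul_dotProduct, dotProduct_smul, huu j j, if_pos rfl]
        simp [sq]; ring
      · intro k _ hk
        rw [smul_dotProduct, dotProduct_smul, huu j k, if_neg (Ne.symm hk)]
        simp
      · intro habs; exact absurd (Finset.mem_univ j) habs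
    rw [hdot]
    have hb : ∀ y : Fin d0 → ℝ, (∑ j, (y ⬝ᵥ v j) ^ 2) ≤ y ⬝ᵥ y := by
      intro y
      have hy : y ⬝ᵥ y = ∑ j, (y ⬝ᵥ v j) ^ 2 := by
        nth_rewrite 2 [hcomp y]
        rw [dotProduct_finsum]
        refine Finset.sum_congr rfl fun j _ => ?_
        rw [dotProduct_smul, smul_eq_mul, sq]
      exact le_of_eq hy.symm
    refine le_trans (Finset.sum_le_sum fun j _ => ?_) (hb x)
    by_cases hl : lam j = 0
    · simp only [hw, hl, if_pos]
      simp
      positivity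
    · have hlp : 0 < lam j := lt_of_le_of_ne (hlam0 j) (Ne.symm hl)
      have hs : Real.sqrt (lam j) ≠ 0 := by positivity
      have hterm : (w j * (v j ⬝ᵥ x)) ^ 2 * lam j = (v j ⬝ᵥ x) ^ 2 := by
        rw [hw]
        simp only [hl, if_false]
        rw [mul_pow, inv_pow, Real.sq_sqrt (hlam0 j)]
        field_simp
      rw [hterm, dotProduct_comm]
  · have hXVj : ∀ j, minner X (vecMulVec (u j) (v j)) = lam j := by
      intro j
      nth_rewrite 1 [hXsum]
      rw [minner_comm, minner_sum_right, Finset.sum_eq_single j]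
      · rw [minner_vecMulVec, huu, hvv]; simp
      · intro k _ hk
        rw [minner_vecMulVec, huu, hvv]; simp [Ne.symm hk]
      · intro habs; exact absurd (Finset.mem_univ j) habs
    rw [minner_comm, minner_sum_right, hnn]
    refine Finset.sum_congr rfl fun j _ => ?_
    rw [minner_smul_right, hXVj j]
    by_cases hl : lam j = 0
    · simp [hw, hl]
    · have hs : Real.sqrt (lam j) ≠ 0 := by
        have hlp : 0 < lam j := lt_of_le_of_ne (hlam0 j) (Ne.symm hl)
        positivity
      rw [hw]
      simp only [hl, if_false]
      rw [← Real.mul_self_sqrt (hlam0 j)]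
      field_simp
      rw [Real.sqrt_sq (Real.sqrt_nonneg _)]

lemma nuclear_triangle {dL d0 : ℕ} (P Q : Matrix (Fin dL) (Fin d0) ℝ) :
    nuclearNorm (P + Q) ≤ nuclearNorm P + nuclearNorm Q := by
  obtain ⟨C, hC, hCg⟩ := nuclear_eq_sup (P + Q)
  rw [← hCg, minner_add_right]
  exact add_le_add (minner_nuclear_le _ _ hC) (minner_nuclear_le _ _ hC)

lemma nuclear_neg_le {dL d0 : ℕ} (W : Matrix (Fin dL) (Fin d0) ℝ) :
    nuclearNorm (-W) ≤ nuclearNorm W := by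
  obtain ⟨C, hC, hCg⟩ := nuclear_eq_sup (-W)
  rw [← hCg]
  have h1 : minner C (-W) = minner (-C) W := by
    simp only [minner_eq, Matrix.neg_apply]
    exact Finset.sum_congr rfl fun i _ => Finset.sum_congr rfl fun j _ => by ring
  rw [h1]
  refine minner_nuclear_le _ _ fun x => ?_
  rw [Matrix.neg_mulVec]
  simpa using hC x

lemma nuclearNorm_neg {dL d0 : ℕ} (W : Matrix (Fin dL) (Fin d0) ℝ) :
    nuclearNorm (-W) = nuclearNorm W :=
  le_antisymm (nuclear_neg_le W) (by simpa using nuclear_neg_le (-W))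

lemma nuclearNorm_zero' {dL d0 : ℕ} :
    nuclearNorm (0 : Matrix (Fin dL) (Fin d0) ℝ) = 0 := by
  obtain ⟨u, v, lam, hlam0, huu, hvv, hXsum, hnn, -⟩ :=
    exists_decomp (0 : Matrix (Fin dL) (Fin d0) ℝ)
  have hfr := frob_sq_of_decomp _ huu hvv hXsum
  have hfr0 : frobNorm (0 : Matrix (Fin dL) (Fin d0) ℝ) ^ 2 = 0 := by
    simp [frobNorm]
  rw [hfr0] at hfr
  have hall : ∀ j ∈ Finset.univ, lam j = 0 :=
    fun j hj => (Finset.sum_eq_zero_iff_of_nonneg (fun j _ => hlam0 j)).mp hfr.symm j hj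
  rw [hnn]
  exact Finset.sum_eq_zero fun j hj => by rw [hall j hj, Real.sqrt_zero]

lemma rank_pair {dL d0 : ℕ} (a c : Fin dL → ℝ) (b d : Fin d0 → ℝ) :
    (vecMulVec a b + vecMulVec c d).rank ≤ 2 := by
  classical
  have hmv : ∀ x : Fin d0 → ℝ,
      (vecMulVec a b + vecMulVec c d) *ᵥ x = (b ⬝ᵥ x) • a + (d ⬝ᵥ x) • c := by
    intro x; funext i
    simp only [Matrix.mulVec, Matrix.add_apply, vecMulVec_apply, dotProduct, Pi.add_apply,
      Pi.smul_apply, smul_eq_mul]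
    rw [Finset.sum_mul, Finset.sum_mul, ← Finset.sum_add_distrib]
    exact Finset.sum_congr rfl fun j _ => by ring
  have hrange : LinearMap.range ((vecMulVec a b + vecMulVec c d).mulVecLin)
      ≤ Submodule.span ℝ {a, c} := by
    rintro y ⟨x, rfl⟩
    rw [Matrix.mulVecLin_apply, hmv]
    exact Submodule.add_mem _
      (Submodule.smul_mem _ _ (Submodule.subset_span (by simp)))
      (Submodule.smul_mem _ _ (Submodule.subset_span (by simp)))
  calc (vecMulVec a b + vecMulVec c d).rank
      ≤ Module.finrank ℝ (Submodule.span ℝ ({a, c} : Set (Fin dL → ℝ))) :=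
        Submodule.finrank_mono hrange
    _ ≤ ({a, c} : Set (Fin dL → ℝ)).toFinset.card := finrank_span_le_card _
    _ ≤ 2 := by
        rw [Set.toFinset_insert, Set.toFinset_singleton]
        exact (Finset.card_insert_le _ _).trans (by simp)

lemma vecMulVec_zero_left {dL d0 : ℕ} (d : Fin d0 → ℝ) :
    vecMulVec (0 : Fin dL → ℝ) d = 0 := by
  ext i j; simp [vecMulVec_apply]

lemma rank_single {dL d0 : ℕ} (a : Fin dL → ℝ) (b : Fin d0 → ℝ) :
    (vecMulVec a b).rank ≤ 2 := by
  have := rank_pair a 0 b 0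
  simpa [vecMulVec_zero_left] using this

lemma smul_vecMulVec {dL d0 : ℕ} (t : ℝ) (a : Fin dL → ℝ) (b : Fin d0 → ℝ) :
    t • vecMulVec a b = vecMulVec (t • a) b := by
  ext i j; simp [vecMulVec_apply]; ring

lemma key {n dL d0 : ℕ} {δ : ℝ} (hδ0 : 0 ≤ δ)
    (A : Fin n → Matrix (Fin dL) (Fin d0) ℝ) (hA : RIP 2 δ A)
    (N : Matrix (Fin dL) (Fin d0) ℝ) (hzero : ∀ i, minner (A i) N = 0) :
    frobNorm N ^ 2 ≤ 2 * δ * nuclearNorm N ^ 2 := by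
  classical
  obtain ⟨u, v, lam, hlam0, huu, hvv, hXsum, hnn, -⟩ := exists_decomp N
  have hfr := frob_sq_of_decomp N huu hvv hXsum
  set c : Fin n → Fin d0 → ℝ := fun i j => minner (A i) (vecMulVec (u j) (v j)) with hc
  set B : Fin d0 → Fin d0 → ℝ := fun j k => (1/(n:ℝ)) * ∑ i, c i j * c i k with hB
  have hminN : ∀ i, (∑ j, c i j) = 0 := by
    intro i
    rw [← hzero i, hXsum, minner_sum_right]
  -- frobNorm of a single dyad
  have hfrd : ∀ j, frobNorm (vecMulVec (u j) (v j)) ^ 2 = lam j := by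
    intro j
    rw [frob_sq, minner_vecMulVec, huu j j, hvv j j]; simp
  -- diagonal bounds
  have hBdiag : ∀ j, (1-δ) * lam j ≤ B j j ∧ B j j ≤ (1+δ) * lam j := by
    intro j
    have hrip := hA (vecMulVec (u j) (v j)) (rank_single _ _)
    rw [hfrd j] at hrip
    have hBq : B j j = (1/(n:ℝ)) * ∑ i, minner (A i) (vecMulVec (u j) (v j)) ^ 2 := by
      simp only [hB, hc, sq]
    rw [hBq]
    exact hrip
  -- off-diagonal bounds
  have hBoff : ∀ j k, j ≠ k → -(2*δ*(Real.sqrt (lam j) * Real.sqrt (lam k))) ≤ B j k := by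
    intro j k hne
    by_cases hlj : lam j = 0
    · have huj : u j = 0 := dot_self_eq_zero (by rw [huu j j, if_pos rfl, hlj])
      have hcz : ∀ i, c i j = 0 := by
        intro i
        simp only [hc, huj, vecMulVec_zero_left]
        simp [minner_eq]
      have : B j k = 0 := by simp [hB, hcz]
      rw [this, hlj, Real.sqrt_zero]
      simp
    by_cases hlk : lam k = 0
    · have huk : u k = 0 := dot_self_eq_zero (by rw [huu k k, if_pos rfl, hlk])
      have hcz : ∀ i, c i k = 0 := by
        intro i
        simp only [hc, huk, vecMulVec_zero_left]
        simp [minner_eq]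
      have : B j k = 0 := by simp [hB, hcz]
      rw [this, hlk, Real.sqrt_zero]
      simp
    · have hljp : 0 < lam j := lt_of_le_of_ne (hlam0 j) (Ne.symm hlj)
      have hlkp : 0 < lam k := lt_of_le_of_ne (hlam0 k) (Ne.symm hlk)
      set sj := Real.sqrt (lam j) with hsj
      set sk := Real.sqrt (lam k) with hsk
      have hsjp : 0 < sj := Real.sqrt_pos.mpr hljp
      have hskp : 0 < sk := Real.sqrt_pos.mpr hlkp
      have hsj2 : sj ^ 2 = lam j := Real.sq_sqrt (hlam0 j)
      have hsk2 : sk ^ 2 = lam k := Real.sq_sqrt (hlam0 k)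
      set P := vecMulVec (sj⁻¹ • u j) (v j) with hP
      set Qm := vecMulVec (sk⁻¹ • u k) (v k) with hQm
      have hPP : minner P P = 1 := by
        rw [hP, minner_vecMulVec, smul_dotProduct, dotProduct_smul,
          huu j j, if_pos rfl, hvv j j, if_pos rfl]
        simp only [smul_eq_mul, mul_one]
        rw [← hsj2]; field_simp
      have hQQ : minner Qm Qm = 1 := by
        rw [hQm, minner_vecMulVec, smul_dotProduct, dotProduct_smul,
          huu k k, if_pos rfl, hvv k k, if_pos rfl]
        simp only [smul_eq_mul, mul_one]
        rw [← hsk2]; field_simp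
      have hPQ : minner P Qm = 0 := by
        rw [hP, hQm, minner_vecMulVec, smul_dotProduct, dotProduct_smul,
          huu j k, if_neg hne]
        simp
      have hQP : minner Qm P = 0 := by rw [minner_comm]; exact hPQ
      have hfrY : frobNorm (P + Qm) ^ 2 = 2 := by
        rw [frob_sq, minner_add_right, minner_comm (P + Qm) P, minner_add_right,
          minner_comm (P + Qm) Qm, minner_add_right, hPP, hQQ, hPQ, hQP]
        norm_num
      have hAiY : ∀ i, minner (A i) (P + Qm) = sj⁻¹ * c i j + sk⁻¹ * c i k := by
        intro i
        rw [minner_add_right, hP, hQm, ← smul_vecMulVec, ← smul_vecMulVec,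
          minner_smul_right, minner_smul_right]
      have hQY : (1/(n:ℝ)) * ∑ i, minner (A i) (P + Qm) ^ 2
          = sj⁻¹^2 * B j j + 2*(sj⁻¹*sk⁻¹) * B j k + sk⁻¹^2 * B k k := by
        have e1 : ∀ i, minner (A i) (P + Qm) ^ 2
            = sj⁻¹^2 * (c i j * c i j) + 2*(sj⁻¹*sk⁻¹) * (c i j * c i k)
              + sk⁻¹^2 * (c i k * c i k) := by
          intro i; rw [hAiY i]; ring
        simp only [hB]
        rw [Finset.sum_congr rfl fun i _ => e1 i, Finset.sum_add_distrib,
          Finset.sum_add_distrib, ← Finset.mul_sum, ← Finset.mul_sum, ← Finset.mul_sum]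
        ring
      have hrip := (hA (P + Qm) (by rw [hP, hQm]; exact rank_pair _ _ _ _)).1
      rw [hfrY, hQY] at hrip
      have h1 : sj⁻¹^2 * lam j = 1 := by rw [← hsj2]; field_simp
      have h2 : sk⁻¹^2 * lam k = 1 := by rw [← hsk2]; field_simp
      have h3 : sj⁻¹^2 * B j j ≤ 1 + δ := by
        have := mul_le_mul_of_nonneg_left (hBdiag j).2 (by positivity : (0:ℝ) ≤ sj⁻¹^2)
        calc sj⁻¹^2 * B j j ≤ sj⁻¹^2 * ((1+δ) * lam j) := this
          _ = (1+δ) * (sj⁻¹^2 * lam j) := by ring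
          _ = 1 + δ := by rw [h1, mul_one]
      have h4 : sk⁻¹^2 * B k k ≤ 1 + δ := by
        have := mul_le_mul_of_nonneg_left (hBdiag k).2 (by positivity : (0:ℝ) ≤ sk⁻¹^2)
        calc sk⁻¹^2 * B k k ≤ sk⁻¹^2 * ((1+δ) * lam k) := this
          _ = (1+δ) * (sk⁻¹^2 * lam k) := by ring
          _ = 1 + δ := by rw [h2, mul_one]
      have h5 : -(4*δ) ≤ 2*(sj⁻¹*sk⁻¹) * B j k := by linarith
      have h6 : (sj*sk/2) * (-(4*δ)) ≤ (sj*sk/2) * (2*(sj⁻¹*sk⁻¹) * B j k) :=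
        mul_le_mul_of_nonneg_left h5 (by positivity)
      have h7 : (sj*sk/2) * (2*(sj⁻¹*sk⁻¹) * B j k) = B j k := by
        field_simp
      have h8 : (sj*sk/2) * (-(4*δ)) = -(2*δ*(sj*sk)) := by ring
      rw [h7, h8] at h6
      exact h6
  -- total sum is zero
  have hsum0 : ∑ j, ∑ k, B j k = 0 := by
    have e1 : ∑ j, ∑ k, B j k = (1/(n:ℝ)) * ∑ j : Fin d0, ∑ k : Fin d0, ∑ i, c i j * c i k := by
      rw [Finset.mul_sum]
      exact Finset.sum_congr rfl fun j _ => by rw [Finset.mul_sum]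
    have e2 : ∑ j : Fin d0, ∑ k : Fin d0, ∑ i, c i j * c i k
        = ∑ i, (∑ j, c i j) * (∑ k, c i k) := by
      calc ∑ j : Fin d0, ∑ k : Fin d0, ∑ i, c i j * c i k
          = ∑ j : Fin d0, ∑ i, ∑ k : Fin d0, c i j * c i k :=
            Finset.sum_congr rfl fun j _ => Finset.sum_comm
        _ = ∑ i, ∑ j : Fin d0, ∑ k : Fin d0, c i j * c i k := Finset.sum_comm
        _ = ∑ i, (∑ j, c i j) * (∑ k, c i k) := by
            refine Finset.sum_congr rfl fun i _ => ?_
            rw [Finset.sum_mul_sum]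
    rw [e1, e2]
    simp [hminN]
  -- lower bound each entry
  have hlow : ∀ j k, (if j = k then lam j else 0)
      - 2*δ*(Real.sqrt (lam j) * Real.sqrt (lam k)) ≤ B j k := by
    intro j k
    rcases eq_or_ne j k with rfl | hne
    · rw [if_pos rfl]
      have hb1 := (hBdiag j).1
      have h2 : lam j - 2*δ*(Real.sqrt (lam j) * Real.sqrt (lam j)) = (1 - 2*δ)*lam j := by
        rw [Real.mul_self_sqrt (hlam0 j)]; ring
      nlinarith [hlam0 j]
    · rw [if_neg hne]
      have := hBoff j k hne
      linarith
  have hs1 : ∑ j, ∑ k, ((if j = k then lam j else 0)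
      - 2*δ*(Real.sqrt (lam j) * Real.sqrt (lam k))) ≤ ∑ j, ∑ k, B j k :=
    Finset.sum_le_sum fun j _ => Finset.sum_le_sum fun k _ => hlow j k
  rw [hsum0] at hs1
  have hsplit : ∑ j, ∑ k, ((if j = k then lam j else 0)
      - 2*δ*(Real.sqrt (lam j) * Real.sqrt (lam k)))
      = (∑ j, lam j) - 2*δ*(∑ j, Real.sqrt (lam j))^2 := by
    have e3 : ∀ j : Fin d0, ∑ k : Fin d0, ((if j = k then lam j else 0)
        - 2*δ*(Real.sqrt (lam j) * Real.sqrt (lam k)))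
        = lam j - 2*δ*(Real.sqrt (lam j) * ∑ k, Real.sqrt (lam k)) := by
      intro j
      rw [Finset.sum_sub_distrib]
      congr 1
      · simp
      · rw [← Finset.mul_sum]
        congr 1
        rw [← Finset.mul_sum]
    rw [Finset.sum_congr rfl fun j _ => e3 j, Finset.sum_sub_distrib]
    congr 1
    rw [← Finset.mul_sum, sq, ← Finset.sum_mul]
  rw [hsplit] at hs1
  rw [hfr, hnn]
  linarith

end RipAux

open RipAux in
/-- Under (2,δ)-RIP, any interpolating M with nuclear norm at most
    ((1+δ)/(1-δ))‖M*‖_* recovers the ground truth up to 8δ/(1-δ)² ‖M*‖_*². -/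
theorem rip_recovery {n d0 dL : ℕ} (δ : ℝ) (hδ : δ < 1)
    (A : Fin n → Matrix (Fin dL) (Fin d0) ℝ) (hA : RIP 2 δ A)
    (Mstar M : Matrix (Fin dL) (Fin d0) ℝ) (b : Fin n → ℝ)
    (hb : ∀ i, b i = minner (A i) Mstar)
    (hfit : ∀ i, minner (A i) M = b i)
    (hnuc : nuclearNorm M ≤ ((1 + δ) / (1 - δ)) * nuclearNorm Mstar) :
    frobNorm (M - Mstar) ^ 2 ≤ 8 * δ / (1 - δ) ^ 2 * nuclearNorm Mstar ^ 2 := by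
  by_cases hδ0 : 0 ≤ δ
  · have hzero : ∀ i, minner (A i) (M - Mstar) = 0 := by
      intro i
      rw [minner_sub_right, hfit i, hb i, sub_self]
    have hkey := key hδ0 A hA (M - Mstar) hzero
    have htri : nuclearNorm (M - Mstar) ≤ nuclearNorm M + nuclearNorm Mstar := by
      rw [sub_eq_add_neg]
      exact (nuclear_triangle M (-Mstar)).trans (by rw [nuclearNorm_neg])
    have h1δ : (0:ℝ) < 1 - δ := by linarith
    have hMs0 : 0 ≤ nuclearNorm Mstar := nuclearNorm_nonneg _
    have hN0 : 0 ≤ nuclearNorm (M - Mstar) := nuclearNorm_nonneg _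
    have hNb : nuclearNorm (M - Mstar) ≤ (2/(1-δ)) * nuclearNorm Mstar := by
      have he : (1+δ)/(1-δ) * nuclearNorm Mstar + nuclearNorm Mstar
          = 2/(1-δ) * nuclearNorm Mstar := by
        field_simp
        ring
      linarith
    have hsq : nuclearNorm (M - Mstar) ^ 2 ≤ (2/(1-δ))^2 * nuclearNorm Mstar ^ 2 := by
      calc nuclearNorm (M - Mstar) ^ 2 ≤ ((2/(1-δ)) * nuclearNorm Mstar) ^ 2 :=
            pow_le_pow_left₀ hN0 hNb 2
        _ = (2/(1-δ))^2 * nuclearNorm Mstar ^ 2 := mul_pow _ _ 2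
    calc frobNorm (M - Mstar) ^ 2 ≤ 2*δ*nuclearNorm (M - Mstar)^2 := hkey
      _ ≤ 2*δ*((2/(1-δ))^2 * nuclearNorm Mstar^2) :=
          mul_le_mul_of_nonneg_left hsq (by linarith)
      _ = 8*δ/(1-δ)^2 * nuclearNorm Mstar^2 := by field_simp; ring
  · push_neg at hδ0
    have hfalse : ∀ (a : Fin dL) (bb : Fin d0), False := by
      intro a bb
      have hrk := rank_single (Pi.single a (1:ℝ)) (Pi.single bb (1:ℝ))
      obtain ⟨hl, hr⟩ := hA _ hrk
      have hf : frobNorm (vecMulVec (Pi.single a (1:ℝ)) (Pi.single bb (1:ℝ))) ^ 2 = 1 := by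
        rw [frob_sq, minner_vecMulVec]
        simp
      rw [hf] at hl hr
      linarith
    have hzM : M - Mstar = 0 := by
      ext a bb; exact (hfalse a bb).elim
    have hzMs : Mstar = 0 := by
      ext a bb; exact (hfalse a bb).elim
    rw [hzM, hzMs, nuclearNorm_zero']
    simp [frobNorm]
end
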